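/- For every q > 1 and every x > 0 with x ≠ 1, one has ψ_q(x) + ψ_q(1/x) < ((x−1)²/x)·log q + 2·ψ_q(1). -/

import Mathlib

open Real

/-- The `q`-digamma function `ψ_q(x)`. For `0 < q < 1`,
`ψ_q(x) = -log(1-q) + (log q) ∑_{n≥1} q^{n x}/(1-q^n)`; for `q > 1`,
`ψ_q(x) = -log(q-1) + (log q)(x - 1/2 - ∑_{n≥1} q^{-n x}/(1-q^{-n}))`;
for `q = 1` it is the classical digamma function `(log ∘ Γ)'`. -/
noncomputable def qDigamma (q x : ℝ) : ℝ :=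
  if q < 1 then
    -Real.log (1 - q) +
      Real.log q * ∑' n : ℕ, q ^ (((n : ℝ) + 1) * x) / (1 - q ^ ((n : ℝ) + 1))
  else if 1 < q then
    -Real.log (q - 1) +
      Real.log q *
        (x - 1 / 2 - ∑' n : ℕ, q ^ (-(((n : ℝ) + 1) * x)) / (1 - q ^ (-((n : ℝ) + 1))))
  else
    deriv (fun y : ℝ => Real.log (Real.Gamma y)) x


noncomputable def qdS (a t : ℝ) : ℝ :=
  ∑' n : ℕ, Real.exp (-(a * ((n : ℝ) + 1)) * t) / (1 - Real.exp (-(a * ((n : ℝ) + 1))))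

noncomputable def qdT (a t : ℝ) : ℝ :=
  ∑' n : ℕ, (a * ((n : ℝ) + 1)) * Real.exp (-(a * ((n : ℝ) + 1)) * t) /
    (1 - Real.exp (-(a * ((n : ℝ) + 1))))

lemma exp_slope_lt {u v : ℝ} (hu : u ≠ 0) (hv : v ≠ 0) (huv : u < v) :
    (Real.exp u - 1) / u < (Real.exp v - 1) / v := by
  have := strictConvexOn_exp.secant_strict_mono (Set.mem_univ 0) (Set.mem_univ u)
    (Set.mem_univ v) hu hv huv
  simpa using this

lemma Cmono {z z' : ℝ} (hz : 0 < z) (hzz : z ≤ z') :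
    z / (1 - Real.exp (-z)) ≤ z' / (1 - Real.exp (-z')) := by
  rcases eq_or_lt_of_le hzz with rfl | h
  · exact le_refl _
  have hz' : 0 < z' := lt_trans hz h
  have h1 : (Real.exp (-z') - 1) / (-z') < (Real.exp (-z) - 1) / (-z) :=
    exp_slope_lt (by linarith) (by linarith) (by linarith)
  have e1 : (Real.exp (-z) - 1) / (-z) = (1 - Real.exp (-z)) / z := by
    rw [div_neg]; ring
  have e2 : (Real.exp (-z') - 1) / (-z') = (1 - Real.exp (-z')) / z' := by
    rw [div_neg]; ring
  rw [e1, e2] at h1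
  have p2 : 0 < (1 - Real.exp (-z')) / z' :=
    div_pos (by nlinarith [Real.exp_lt_one_iff.mpr (by linarith : -z' < 0)]) hz'
  have := one_div_le_one_div_of_le p2 h1.le
  rw [one_div_div, one_div_div] at this
  exact this

lemma wanti {u v : ℝ} (hu : 0 < u) (huv : u < v) :
    v / (Real.exp v - 1) < u / (Real.exp u - 1) := by
  have hv : 0 < v := lt_trans hu huv
  have h1 : (Real.exp u - 1) / u < (Real.exp v - 1) / v :=
    exp_slope_lt (ne_of_gt hu) (ne_of_gt hv) huv
  have p1 : 0 < (Real.exp u - 1) / u :=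
    div_pos (by nlinarith [Real.one_lt_exp_iff.mpr hu]) hu
  have := one_div_lt_one_div_of_lt p1 h1
  rw [one_div_div, one_div_div] at this
  exact this

lemma e_eq {a y : ℝ} (n : ℕ) :
    Real.exp (-(a * ((n : ℝ) + 1)) * y) = Real.exp (-(a * y)) ^ (n + 1) := by
  rw [← Real.exp_nat_mul]
  congr 1
  push_cast
  ring

lemma summable_e {a y : ℝ} (ha : 0 < a) (hy : 0 < y) :
    Summable (fun n : ℕ => Real.exp (-(a * ((n : ℝ) + 1)) * y)) := by
  have h1 : Real.exp (-(a * y)) < 1 := Real.exp_lt_one_iff.mpr (by nlinarith)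
  have h0 : 0 ≤ Real.exp (-(a * y)) := (Real.exp_pos _).le
  simp_rw [e_eq]
  exact ((summable_geometric_of_lt_one h0 h1).mul_left _).congr
    (fun n => by rw [pow_succ]; ring)

lemma geom_eval {a y : ℝ} (ha : 0 < a) (hy : 0 < y) :
    ∑' n : ℕ, Real.exp (-(a * ((n : ℝ) + 1)) * y)
      = Real.exp (-(a * y)) / (1 - Real.exp (-(a * y))) := by
  have h1 : Real.exp (-(a * y)) < 1 := Real.exp_lt_one_iff.mpr (by nlinarith)
  have h0 : 0 ≤ Real.exp (-(a * y)) := (Real.exp_pos _).le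
  simp_rw [e_eq]
  have : ∀ n : ℕ, Real.exp (-(a * y)) ^ (n + 1)
      = Real.exp (-(a * y)) * Real.exp (-(a * y)) ^ n := fun n => by rw [pow_succ]; ring
  rw [tsum_congr this, tsum_mul_left, tsum_geometric_of_lt_one h0 h1]
  rw [div_eq_mul_inv]

lemma den_pos {a : ℝ} (ha : 0 < a) (n : ℕ) :
    0 < 1 - Real.exp (-(a * ((n : ℝ) + 1))) := by
  have : Real.exp (-(a * ((n : ℝ) + 1))) < 1 := by
    apply Real.exp_lt_one_iff.mpr
    have : (0:ℝ) < (n : ℝ) + 1 := by positivity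
    nlinarith
  linarith

lemma den_ge {a : ℝ} (ha : 0 < a) (n : ℕ) :
    1 - Real.exp (-a) ≤ 1 - Real.exp (-(a * ((n : ℝ) + 1))) := by
  have hn : (0:ℝ) ≤ (n : ℝ) := Nat.cast_nonneg n
  have : Real.exp (-(a * ((n : ℝ) + 1))) ≤ Real.exp (-a) := by
    apply Real.exp_le_exp.mpr
    nlinarith
  linarith

lemma summable_Te {a y : ℝ} (ha : 0 < a) (hy : 0 < y) :
    Summable (fun n : ℕ => (a * ((n : ℝ) + 1)) * Real.exp (-(a * ((n : ℝ) + 1)) * y)) := by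
  have h1 : ‖Real.exp (-(a * y))‖ < 1 := by
    rw [Real.norm_eq_abs, abs_of_nonneg (Real.exp_pos _).le]
    exact Real.exp_lt_one_iff.mpr (by nlinarith)
  have hs := summable_pow_mul_geometric_of_norm_lt_one 1 h1
  have hg : Summable (fun n : ℕ => Real.exp (-(a*y)) ^ n) :=
    summable_geometric_of_lt_one (Real.exp_pos _).le
      (by rw [Real.norm_eq_abs, abs_of_nonneg (Real.exp_pos _).le] at h1; exact h1)
  have hsum : Summable (fun n : ℕ =>
      a * Real.exp (-(a*y)) * ((n:ℝ) ^ 1 * Real.exp (-(a*y)) ^ n)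
        + a * Real.exp (-(a*y)) * Real.exp (-(a*y)) ^ n) :=
    (hs.mul_left _).add (hg.mul_left _)
  apply hsum.congr
  intro n
  rw [e_eq, pow_succ]
  ring

lemma summable_S {a y : ℝ} (ha : 0 < a) (hy : 0 < y) :
    Summable (fun n : ℕ => Real.exp (-(a * ((n : ℝ) + 1)) * y) /
      (1 - Real.exp (-(a * ((n : ℝ) + 1))))) := by
  have hea : 0 < 1 - Real.exp (-a) := by
    have := Real.exp_lt_one_iff.mpr (by linarith : -a < 0); linarith
  refine Summable.of_nonneg_of_le (fun n => ?_) (fun n => ?_)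
    ((summable_e ha hy).mul_right (1 - Real.exp (-a))⁻¹)
  · exact div_nonneg (Real.exp_pos _).le (den_pos ha n).le
  · rw [div_eq_mul_inv]
    exact mul_le_mul_of_nonneg_left (inv_anti₀ hea (den_ge ha n)) (Real.exp_pos _).le

lemma summable_T {a y : ℝ} (ha : 0 < a) (hy : 0 < y) :
    Summable (fun n : ℕ => (a * ((n : ℝ) + 1)) * Real.exp (-(a * ((n : ℝ) + 1)) * y) /
      (1 - Real.exp (-(a * ((n : ℝ) + 1))))) := by
  have hea : 0 < 1 - Real.exp (-a) := by
    have := Real.exp_lt_one_iff.mpr (by linarith : -a < 0); linarith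
  refine Summable.of_nonneg_of_le (fun n => ?_) (fun n => ?_)
    ((summable_Te ha hy).mul_right (1 - Real.exp (-a))⁻¹)
  · have hn : (0:ℝ) < (n:ℝ) + 1 := by positivity
    exact div_nonneg (by positivity) (den_pos ha n).le
  · have hn : (0:ℝ) < (n:ℝ) + 1 := by positivity
    rw [div_eq_mul_inv]
    exact mul_le_mul_of_nonneg_left (inv_anti₀ hea (den_ge ha n)) (by positivity)

lemma hasDerivAt_qdS {a t : ℝ} (ha : 0 < a) (ht : 0 < t) :
    HasDerivAt (qdS a) (-qdT a t) t := by
  have hδ : 0 < t / 2 := by positivity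
  have hea : 0 < 1 - Real.exp (-a) := by
    have := Real.exp_lt_one_iff.mpr (by linarith : -a < 0); linarith
  have hu : Summable (fun n : ℕ =>
      (a * ((n : ℝ) + 1)) * Real.exp (-(a * ((n : ℝ) + 1)) * (t/2))
        * (1 - Real.exp (-a))⁻¹) :=
    (summable_Te ha hδ).mul_right _
  have hg : ∀ n : ℕ, ∀ y : ℝ, y ∈ Set.Ioi (t/2) →
      HasDerivAt (fun z => Real.exp (-(a * ((n : ℝ) + 1)) * z) /
          (1 - Real.exp (-(a * ((n : ℝ) + 1)))))
        (-((a * ((n : ℝ) + 1)) * Real.exp (-(a * ((n : ℝ) + 1)) * y) /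
          (1 - Real.exp (-(a * ((n : ℝ) + 1)))))) y := by
    intro n y _
    have h1 : HasDerivAt (fun z : ℝ => -(a * ((n : ℝ) + 1)) * z)
        (-(a * ((n : ℝ) + 1))) y := by
      simpa using (hasDerivAt_id y).const_mul (-(a * ((n : ℝ) + 1)))
    have h2 := (Real.hasDerivAt_exp (-(a * ((n : ℝ) + 1)) * y)).comp y h1
    have h3 := h2.div_const (1 - Real.exp (-(a * ((n : ℝ) + 1))))
    exact h3.congr_deriv (by ring)
  have hg' : ∀ n : ℕ, ∀ y : ℝ, y ∈ Set.Ioi (t/2) →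
      ‖-((a * ((n : ℝ) + 1)) * Real.exp (-(a * ((n : ℝ) + 1)) * y) /
          (1 - Real.exp (-(a * ((n : ℝ) + 1)))))‖
        ≤ (a * ((n : ℝ) + 1)) * Real.exp (-(a * ((n : ℝ) + 1)) * (t/2))
            * (1 - Real.exp (-a))⁻¹ := by
    intro n y hy
    have hn : (0:ℝ) < (n:ℝ) + 1 := by positivity
    have hyδ : t/2 < y := hy
    rw [norm_neg, Real.norm_eq_abs, abs_of_nonneg (div_nonneg (by positivity) (den_pos ha n).le)]
    calc (a * ((n : ℝ) + 1)) * Real.exp (-(a * ((n : ℝ) + 1)) * y) /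
          (1 - Real.exp (-(a * ((n : ℝ) + 1))))
        ≤ (a * ((n : ℝ) + 1)) * Real.exp (-(a * ((n : ℝ) + 1)) * (t/2)) / (1 - Real.exp (-a)) := by
          apply div_le_div₀ (by positivity) ?_ hea (den_ge ha n)
          have : Real.exp (-(a * ((n : ℝ) + 1)) * y) ≤ Real.exp (-(a * ((n : ℝ) + 1)) * (t/2)) := by
            apply Real.exp_le_exp.mpr
            nlinarith [mul_pos (mul_pos ha hn) (sub_pos.mpr hyδ)]
          nlinarith [this, mul_pos ha hn]
      _ = (a * ((n : ℝ) + 1)) * Real.exp (-(a * ((n : ℝ) + 1)) * (t/2))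
            * (1 - Real.exp (-a))⁻¹ := by rw [div_eq_mul_inv]
  have key := hasDerivAt_tsum_of_isPreconnected hu isOpen_Ioi isPreconnected_Ioi
    hg hg' (Set.mem_Ioi.mpr (by linarith : t/2 < t)) (summable_S ha ht)
    (Set.mem_Ioi.mpr (by linarith : t/2 < t))
  have : ∑' n : ℕ, -((a * ((n : ℝ) + 1)) * Real.exp (-(a * ((n : ℝ) + 1)) * t) /
      (1 - Real.exp (-(a * ((n : ℝ) + 1))))) = -qdT a t := by
    rw [tsum_neg]; rfl
  rw [this] at key
  exact key

lemma core {a t : ℝ} (ha : 0 < a) (ht : 1 < t) :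
    t * qdT a t < (1 / t) * qdT a (1 / t) := by
  have ht0 : 0 < t := by linarith
  have hti : 0 < 1 / t := by positivity
  have htl : 1 / t < 1 := by rw [div_lt_one ht0]; exact ht
  have htt : 0 < t - 1 / t := by linarith
  have hlt : 0 < Real.log t := Real.log_pos ht
  set θ : ℝ := 2 * Real.log t / (t - 1 / t) with hθdef
  have hθ : 0 < θ := by positivity
  have hθe : Real.exp (-θ) < 1 := Real.exp_lt_one_iff.mpr (by linarith)
  set cs : ℝ := θ / (1 - Real.exp (-θ)) with hcs
  have hcs0 : 0 < cs := div_pos hθ (by linarith)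
  -- sign lemmas
  have tpos : (0:ℝ) < Real.exp (Real.log t) := Real.exp_pos _
  have e_t : ∀ B : ℝ, t * Real.exp (-B * t) = Real.exp (Real.log t + -B * t) := by
    intro B; rw [Real.exp_add, Real.exp_log ht0]
  have e_i : ∀ B : ℝ, 1 / t * Real.exp (-B * (1 / t))
      = Real.exp (-Real.log t + -B * (1 / t)) := by
    intro B
    rw [Real.exp_add, Real.exp_neg, Real.exp_log ht0, one_div, inv_mul_eq_div, div_eq_mul_inv]
  have signA : ∀ B : ℝ, θ ≤ B → t * Real.exp (-B * t) ≤ 1 / t * Real.exp (-B * (1 / t)) := by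
    intro B hB
    rw [e_t, e_i]
    apply Real.exp_le_exp.mpr
    have h2 : 2 * Real.log t ≤ B * (t - 1 / t) := by
      rw [hθdef, div_le_iff₀ htt] at hB; linarith
    nlinarith
  have signB : ∀ B : ℝ, B ≤ θ → 1 / t * Real.exp (-B * (1 / t)) ≤ t * Real.exp (-B * t) := by
    intro B hB
    rw [e_t, e_i]
    apply Real.exp_le_exp.mpr
    have h2 : B * (t - 1 / t) ≤ 2 * Real.log t := by
      rw [hθdef, le_div_iff₀ htt] at hB; linarith
    nlinarith
  -- per-term comparison
  have per : ∀ n : ℕ,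
      t * ((a * ((n : ℝ) + 1)) * Real.exp (-(a * ((n : ℝ) + 1)) * t) /
          (1 - Real.exp (-(a * ((n : ℝ) + 1)))))
        - 1 / t * ((a * ((n : ℝ) + 1)) * Real.exp (-(a * ((n : ℝ) + 1)) * (1 / t)) /
          (1 - Real.exp (-(a * ((n : ℝ) + 1)))))
      ≤ cs * (t * Real.exp (-(a * ((n : ℝ) + 1)) * t)
          - 1 / t * Real.exp (-(a * ((n : ℝ) + 1)) * (1 / t))) := by
    intro n
    set B : ℝ := a * ((n : ℝ) + 1) with hB
    have hBpos : 0 < B := by rw [hB]; positivity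
    have hD : 0 < 1 - Real.exp (-B) := by
      have := den_pos ha n; rwa [← hB] at this
    set C : ℝ := B / (1 - Real.exp (-B)) with hC
    have expand : t * (B * Real.exp (-B * t) / (1 - Real.exp (-B)))
        - 1 / t * (B * Real.exp (-B * (1 / t)) / (1 - Real.exp (-B)))
        = C * (t * Real.exp (-B * t) - 1 / t * Real.exp (-B * (1 / t))) := by
      rw [hC]; field_simp
    rw [expand]
    rcases le_total B θ with h | h
    · have h1 : C ≤ cs := Cmono hBpos h
      have h2 : 0 ≤ t * Real.exp (-B * t) - 1 / t * Real.exp (-B * (1 / t)) := by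
        have := signB B h; linarith
      nlinarith
    · have h1 : cs ≤ C := Cmono hθ h
      have h2 : t * Real.exp (-B * t) - 1 / t * Real.exp (-B * (1 / t)) ≤ 0 := by
        have := signA B h; linarith
      nlinarith
  -- summability
  have hTt := summable_T ha ht0
  have hTi := summable_T ha hti
  have het := summable_e ha ht0
  have hei := summable_e ha hti
  have hsum1 : Summable (fun n : ℕ =>
      t * ((a * ((n : ℝ) + 1)) * Real.exp (-(a * ((n : ℝ) + 1)) * t) /
          (1 - Real.exp (-(a * ((n : ℝ) + 1)))))
        - 1 / t * ((a * ((n : ℝ) + 1)) * Real.exp (-(a * ((n : ℝ) + 1)) * (1 / t)) /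
          (1 - Real.exp (-(a * ((n : ℝ) + 1)))))) :=
    (hTt.mul_left t).sub (hTi.mul_left (1 / t))
  have hsum2 : Summable (fun n : ℕ =>
      cs * (t * Real.exp (-(a * ((n : ℝ) + 1)) * t)
        - 1 / t * Real.exp (-(a * ((n : ℝ) + 1)) * (1 / t)))) :=
    ((het.mul_left t).sub (hei.mul_left (1 / t))).mul_left cs
  have lhs_eq : t * qdT a t - 1 / t * qdT a (1 / t)
      = ∑' n : ℕ,
        (t * ((a * ((n : ℝ) + 1)) * Real.exp (-(a * ((n : ℝ) + 1)) * t) /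
          (1 - Real.exp (-(a * ((n : ℝ) + 1)))))
        - 1 / t * ((a * ((n : ℝ) + 1)) * Real.exp (-(a * ((n : ℝ) + 1)) * (1 / t)) /
          (1 - Real.exp (-(a * ((n : ℝ) + 1)))))) := by
    rw [qdT, qdT, ← tsum_mul_left, ← tsum_mul_left,
      ← Summable.tsum_sub (hTt.mul_left t) (hTi.mul_left (1 / t))]
  have rhs_eq : (∑' n : ℕ,
      cs * (t * Real.exp (-(a * ((n : ℝ) + 1)) * t)
        - 1 / t * Real.exp (-(a * ((n : ℝ) + 1)) * (1 / t))))
      = cs * (t * (Real.exp (-(a * t)) / (1 - Real.exp (-(a * t))))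
          - 1 / t * (Real.exp (-(a * (1 / t))) / (1 - Real.exp (-(a * (1 / t)))))) := by
    rw [tsum_mul_left, Summable.tsum_sub (het.mul_left t) (hei.mul_left (1 / t)),
      tsum_mul_left, tsum_mul_left, geom_eval ha ht0, geom_eval ha hti]
  -- final closed form strict inequality
  have conv : ∀ y : ℝ, 0 < y →
      y * (Real.exp (-(a * y)) / (1 - Real.exp (-(a * y))))
        = (a * y / (Real.exp (a * y) - 1)) / a := by
    intro y hy
    have h1 : Real.exp (-(a * y)) = (Real.exp (a * y))⁻¹ := by
      rw [← Real.exp_neg]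
    have h2 : 1 < Real.exp (a * y) := Real.one_lt_exp_iff.mpr (by positivity)
    have hE0 : Real.exp (a * y) ≠ 0 := (Real.exp_pos _).ne'
    have h3 : (Real.exp (a * y))⁻¹ < 1 := by
      rw [inv_lt_one_iff₀]; right; exact h2
    have h4 : 1 - (Real.exp (a * y))⁻¹ ≠ 0 := by linarith [h3]
    have h5 : Real.exp (a * y) - 1 ≠ 0 := by linarith [h2]
    rw [h1]
    field_simp
  have hw : a * t / (Real.exp (a * t) - 1) < a * (1 / t) / (Real.exp (a * (1 / t)) - 1) :=
    wanti (by positivity) (mul_lt_mul_of_pos_left (htl.trans ht) ha)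
  have final : cs * (t * (Real.exp (-(a * t)) / (1 - Real.exp (-(a * t))))
      - 1 / t * (Real.exp (-(a * (1 / t))) / (1 - Real.exp (-(a * (1 / t)))))) < 0 := by
    rw [conv t ht0, conv (1 / t) hti]
    apply mul_neg_of_pos_of_neg hcs0
    have h6 : a * t / (Real.exp (a * t) - 1) / a < a * (1 / t) / (Real.exp (a * (1 / t)) - 1) / a :=
      (div_lt_div_iff_of_pos_right ha).mpr hw
    linarith
  have chain : t * qdT a t - 1 / t * qdT a (1 / t) < 0 := by
    rw [lhs_eq]
    calc (∑' n : ℕ,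
        (t * ((a * ((n : ℝ) + 1)) * Real.exp (-(a * ((n : ℝ) + 1)) * t) /
          (1 - Real.exp (-(a * ((n : ℝ) + 1)))))
        - 1 / t * ((a * ((n : ℝ) + 1)) * Real.exp (-(a * ((n : ℝ) + 1)) * (1 / t)) /
          (1 - Real.exp (-(a * ((n : ℝ) + 1)))))))
        ≤ ∑' n : ℕ, cs * (t * Real.exp (-(a * ((n : ℝ) + 1)) * t)
            - 1 / t * Real.exp (-(a * ((n : ℝ) + 1)) * (1 / t))) :=
          Summable.tsum_le_tsum per hsum1 hsum2
      _ = _ := rhs_eq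
      _ < 0 := final
  linarith

lemma hasDerivAt_phi {a t : ℝ} (ha : 0 < a) (ht : 0 < t) :
    HasDerivAt (fun y => qdS a y + qdS a (1 / y))
      (-qdT a t + qdT a (1 / t) * (t ^ 2)⁻¹) t := by
  have hti : 0 < 1 / t := by positivity
  have h1 := hasDerivAt_qdS ha ht
  have hinv : HasDerivAt (fun y : ℝ => 1 / y) (-(t ^ 2)⁻¹) t := by
    simpa only [one_div] using hasDerivAt_inv (ne_of_gt ht)
  have h2 := (hasDerivAt_qdS ha hti).comp t hinv
  have h3 := h1.add h2
  exact h3.congr_deriv (by ring)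

lemma phi_strictMono {a : ℝ} (ha : 0 < a) :
    StrictMonoOn (fun t => qdS a t + qdS a (1 / t)) (Set.Ici (1 : ℝ)) := by
  apply strictMonoOn_of_deriv_pos (convex_Ici 1)
  · intro t htm
    have ht : 0 < t := lt_of_lt_of_le zero_lt_one htm
    exact (hasDerivAt_phi ha ht).continuousAt.continuousWithinAt
  · intro t htm
    rw [interior_Ici] at htm
    have ht1 : 1 < t := htm
    have ht : 0 < t := by linarith
    rw [(hasDerivAt_phi ha ht).deriv]
    have hc := core ha ht1
    have e1 : qdT a t = 1 / t * (t * qdT a t) := by field_simp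
    have e2 : 1 / t * (1 / t * qdT a (1 / t)) = qdT a (1 / t) * (t ^ 2)⁻¹ := by
      ring
    have := mul_lt_mul_of_pos_left hc (by positivity : (0:ℝ) < 1 / t)
    rw [← e1, e2] at this
    linarith

lemma key_S {a x : ℝ} (ha : 0 < a) (hx : 0 < x) (hx1 : x ≠ 1) :
    2 * qdS a 1 < qdS a x + qdS a (1 / x) := by
  have phi1 : qdS a 1 + qdS a (1 / 1) = 2 * qdS a 1 := by norm_num; ring
  rcases lt_or_gt_of_ne hx1 with h | h
  · have h1 : 1 < 1 / x := by rw [lt_div_iff₀ hx]; linarith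
    have := phi_strictMono ha (Set.self_mem_Ici) (Set.mem_Ici.mpr h1.le) h1
    simp only [] at this
    rw [phi1, one_div_one_div] at this
    linarith
  · have := phi_strictMono ha (Set.self_mem_Ici) (Set.mem_Ici.mpr h.le) h
    simp only [] at this
    rw [phi1] at this
    linarith

lemma qDigamma_eq {q : ℝ} (hq : 1 < q) (x : ℝ) :
    qDigamma q x = -Real.log (q - 1) + Real.log q * (x - 1 / 2 - qdS (Real.log q) x) := by
  have hq0 : 0 < q := by linarith
  rw [qDigamma, if_neg (by linarith), if_pos hq]
  have h1 : ∀ n : ℕ, q ^ (-(((n : ℝ) + 1) * x)) / (1 - q ^ (-((n : ℝ) + 1)))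
      = Real.exp (-(Real.log q * ((n : ℝ) + 1)) * x) /
        (1 - Real.exp (-(Real.log q * ((n : ℝ) + 1)))) := by
    intro n
    rw [Real.rpow_def_of_pos hq0, Real.rpow_def_of_pos hq0]
    rw [show Real.log q * -(((n : ℝ) + 1) * x) = -(Real.log q * ((n : ℝ) + 1)) * x by ring,
      show Real.log q * -((n : ℝ) + 1) = -(Real.log q * ((n : ℝ) + 1)) by ring]
  rw [tsum_congr h1]
  rfl


/-- For every `q > 1` and every `x > 0` with `x ≠ 1`,
`ψ_q(x) + ψ_q(1/x) < ((x-1)²/x)·log q + 2·ψ_q(1)`. -/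
theorem qDigamma_add_inv_lt_of_one_lt (q : ℝ) (hq : 1 < q)
    (x : ℝ) (hx : 0 < x) (hx1 : x ≠ 1) :
    qDigamma q x + qDigamma q (1 / x) <
      (x - 1) ^ 2 / x * Real.log q + 2 * qDigamma q 1 := by
  have ha : 0 < Real.log q := Real.log_pos hq
  have key := key_S ha hx hx1
  rw [qDigamma_eq hq, qDigamma_eq hq, qDigamma_eq hq]
  have hsq : (x - 1) ^ 2 / x = x + 1 / x - 2 := by field_simp; ring
  rw [hsq]
  nlinarith [mul_pos ha (by linarith :
    (0:ℝ) < qdS (Real.log q) x + qdS (Real.log q) (1/x) - 2 * qdS (Real.log q) 1)]
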